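/- (Restricted biorthogonality is preserved under oblique projection.) Let Ψ, Ψ̃ ∈ K^{m×n}, let Ĵ ⊆ {1,…,n} with |Ĵ| = r, and let s ≥ 1 be such that θ_{s+r}(Ψ̃*Ψ) < 1. Then Ψ̃_Ĵ*Ψ_Ĵ is invertible and, setting E = I_m − Ψ_Ĵ(Ψ̃_Ĵ*Ψ_Ĵ)^{-1}Ψ̃_Ĵ* (with E = I_m when Ĵ = ∅), the (n−r)×(n−r) matrix Ψ̃_{[n]\Ĵ}* E Ψ_{[n]\Ĵ} satisfies θ_s(Ψ̃_{[n]\Ĵ}* E Ψ_{[n]\Ĵ}) ≤ θ_{s+r}(Ψ̃*Ψ). -/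

import Mathlib

open scoped BigOperators
open Matrix MeasureTheory

noncomputable section

namespace ObliquePursuit

variable {𝕜 : Type*} [RCLike 𝕜]

/-- The Euclidean (`ℓ²`) norm of a finitely indexed vector. -/
def l2 {ι : Type*} [Fintype ι] (x : ι → 𝕜) : ℝ :=
  Real.sqrt (∑ i, ‖x i‖ ^ 2)

/-- The spectral (`ℓ² → ℓ²` operator) norm of a matrix. -/
def specNorm {ι κ : Type*} [Fintype ι] [Fintype κ] [DecidableEq κ]
    (M : Matrix ι κ 𝕜) : ℝ :=
  ‖LinearMap.toContinuousLinearMap (Matrix.toEuclideanLin M)‖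

/-- `x` is `s`-sparse: it has at most `s` nonzero entries. -/
def Sparse {ι : Type*} (s : ℕ) (x : ι → 𝕜) : Prop :=
  ∃ J : Finset ι, J.card ≤ s ∧ ∀ i, x i ≠ 0 → i ∈ J

/-- The `s`-restricted biorthogonality constant `θ_s(M)`: the smallest `δ ≥ 0` such that
`|⟨y, Mx⟩ − ⟨y, x⟩| ≤ δ‖x‖₂‖y‖₂` for all `x, y` supported on a common index set of
cardinality at most `s`. -/
def theta {ι : Type*} [Fintype ι] (s : ℕ) (M : Matrix ι ι 𝕜) : ℝ :=
  sInf {δ : ℝ | 0 ≤ δ ∧ ∀ J : Finset ι, J.card ≤ s →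
    ∀ x y : ι → 𝕜, (∀ i, x i ≠ 0 → i ∈ J) → (∀ i, y i ≠ 0 → i ∈ J) →
      ‖star y ⬝ᵥ M.mulVec x - star y ⬝ᵥ x‖ ≤ δ * l2 x * l2 y}

/-- The `s`-restricted isometry constant `δ_s(Ψ)`. -/
def ric {ι κ : Type*} [Fintype ι] [Fintype κ] (s : ℕ) (Ψ : Matrix ι κ 𝕜) : ℝ :=
  sInf {δ : ℝ | 0 ≤ δ ∧ ∀ x : κ → 𝕜, Sparse s x →
    (1 - δ) * l2 x ^ 2 ≤ l2 (Ψ.mulVec x) ^ 2 ∧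
      l2 (Ψ.mulVec x) ^ 2 ≤ (1 + δ) * l2 x ^ 2}

/-- Coordinate projection `Π_J`: keep the entries indexed by `J`, zero out the others. -/
def proj {ι : Type*} [DecidableEq ι] (J : Finset ι) (x : ι → 𝕜) : ι → 𝕜 :=
  fun i => if i ∈ J then x i else 0

/-- The column submatrix `Ψ_J` of `Ψ` formed by the columns indexed by `J`. -/
def cols {ι κ : Type*} (Ψ : Matrix ι κ 𝕜) (J : Finset κ) :
    Matrix ι {j // j ∈ J} 𝕜 :=
  Ψ.submatrix id fun j => (j : κ)

/-- The `j`-th column of `Ψ`. -/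
def col {ι κ : Type*} (Ψ : Matrix ι κ 𝕜) (j : κ) : ι → 𝕜 :=
  fun i => Ψ i j

/-- The complementary oblique projector `E = I − Ψ_J (Ψ̃_J^* Ψ_J)⁻¹ Ψ̃_J^*`
(equal to `I` when `J = ∅`). -/
def obliqueE {ι κ : Type*} [Fintype ι] [DecidableEq ι] [DecidableEq κ]
    (Ψ Ψt : Matrix ι κ 𝕜) (J : Finset κ) : Matrix ι ι 𝕜 :=
  1 - cols Ψ J * ((cols Ψt J)ᴴ * cols Ψ J)⁻¹ * (cols Ψt J)ᴴ

/-- The smallest (real) eigenvalue of a matrix. -/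
def lamMin {ι : Type*} [Fintype ι] (G : Matrix ι ι 𝕜) : ℝ :=
  sInf {r : ℝ | ∃ v : ι → 𝕜, v ≠ 0 ∧ G.mulVec v = (r : 𝕜) • v}

/-- The `j`-th largest singular value (1-indexed) of a matrix, characterized via the
Eckart–Young–Mirsky theorem: `σ_j(A) = min { ‖A − B‖ : rank B < j }` where `‖·‖` is the
spectral norm. -/
def singVal {ι κ : Type*} [Fintype ι] [Fintype κ] [DecidableEq κ]
    (A : Matrix ι κ 𝕜) (j : ℕ) : ℝ :=
  sInf {r : ℝ | ∃ B : Matrix ι κ 𝕜, B.rank < j ∧ r = specNorm (A - B)}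

section Aux

variable {ι : Type*} [Fintype ι] [DecidableEq ι]

/-- Extension by zero of a vector indexed by a finset. -/
def extv (J : Finset ι) (z : {j // j ∈ J} → 𝕜) : ι → 𝕜 :=
  fun i => if h : i ∈ J then z ⟨i, h⟩ else 0

lemma extv_coe (J : Finset ι) (z : {j // j ∈ J} → 𝕜) (j : {j // j ∈ J}) :
    extv J z ↑j = z j := dif_pos j.2

lemma extv_not_mem (J : Finset ι) (z : {j // j ∈ J} → 𝕜) {i : ι} (h : i ∉ J) :
    extv J z i = 0 := dif_neg h

lemma sum_extv {β : Type*} [AddCommMonoid β] (J : Finset ι) (z : {j // j ∈ J} → 𝕜)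
    (F : ι → 𝕜 → β) (hF : ∀ i, F i 0 = 0) :
    ∑ i, F i (extv J z i) = ∑ j : {j // j ∈ J}, F (j : ι) (z j) := by
  have h1 : ∑ i, F i (extv J z i) = ∑ i ∈ J, F i (extv J z i) :=
    (Finset.sum_subset J.subset_univ (fun i _ hi => by rw [extv_not_mem J z hi, hF])).symm
  rw [h1, ← Finset.sum_attach J fun i => F i (extv J z i), Finset.univ_eq_attach]
  exact Finset.sum_congr rfl fun j _ => by rw [extv_coe]

lemma l2_nonneg (x : ι → 𝕜) : 0 ≤ l2 x := Real.sqrt_nonneg _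

lemma l2_sq (x : ι → 𝕜) : l2 x ^ 2 = ∑ i, ‖x i‖ ^ 2 :=
  Real.sq_sqrt (Finset.sum_nonneg fun i _ => sq_nonneg _)

lemma l2_mul_self (x : ι → 𝕜) : l2 x * l2 x = ∑ i, ‖x i‖ ^ 2 := by
  rw [← sq, l2_sq]

lemma norm_le_l2 (x : ι → 𝕜) (i : ι) : ‖x i‖ ≤ l2 x := by
  rw [l2, ← Real.sqrt_sq (norm_nonneg (x i))]
  exact Real.sqrt_le_sqrt
    (Finset.single_le_sum (f := fun j => ‖x j‖ ^ 2) (fun j _ => sq_nonneg _) (Finset.mem_univ i))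

lemma mulVec_extv {κ : Type*} (Ψ : Matrix κ ι 𝕜) (J : Finset ι) (z : {j // j ∈ J} → 𝕜) :
    Ψ.mulVec (extv J z) = (cols Ψ J).mulVec z := by
  ext i
  simp only [Matrix.mulVec, dotProduct, cols, Matrix.submatrix_apply, id]
  exact sum_extv J z (fun j t => Ψ i j * t) (fun j => mul_zero _)

lemma star_extv_dot (J : Finset ι) (z : {j // j ∈ J} → 𝕜) (u : ι → 𝕜) :
    star (extv J z) ⬝ᵥ u = ∑ j : {j // j ∈ J}, star (z j) * u ↑j := by
  simp only [dotProduct, Pi.star_apply]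
  exact sum_extv J z (fun i t => star t * u i) (fun i => by simp)

lemma colsH_mulVec {κ : Type*} [Fintype κ] (Ψt : Matrix κ ι 𝕜) (J : Finset ι) (v : κ → 𝕜)
    (j : {j // j ∈ J}) :
    (cols Ψt J)ᴴ.mulVec v j = Ψtᴴ.mulVec v ↑j := by
  simp [Matrix.mulVec, dotProduct, cols, Matrix.conjTranspose_apply]

lemma star_sub_smul_dot (u e v : ι → 𝕜) (c : 𝕜) :
    star (u - c • e) ⬝ᵥ v = star u ⬝ᵥ v - star c * (star e ⬝ᵥ v) := by
  simp only [dotProduct, Pi.star_apply, Pi.sub_apply, Pi.smul_apply, smul_eq_mul,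
    star_sub, star_mul', Finset.mul_sum, ← Finset.sum_sub_distrib]
  exact Finset.sum_congr rfl fun i _ => by ring

lemma theta_set_nonempty {ι : Type*} [Fintype ι] [DecidableEq ι] (s : ℕ) (M : Matrix ι ι 𝕜) :
    Set.Nonempty {δ : ℝ | 0 ≤ δ ∧ ∀ J : Finset ι, J.card ≤ s →
      ∀ x y : ι → 𝕜, (∀ i, x i ≠ 0 → i ∈ J) → (∀ i, y i ≠ 0 → i ∈ J) →
        ‖star y ⬝ᵥ M.mulVec x - star y ⬝ᵥ x‖ ≤ δ * l2 x * l2 y} := by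
  refine ⟨∑ i, ∑ j, ‖(M - 1) i j‖,
    Finset.sum_nonneg fun i _ => Finset.sum_nonneg fun j _ => norm_nonneg _, ?_⟩
  intro J hJ x y hx hy
  have h1 : star y ⬝ᵥ M.mulVec x - star y ⬝ᵥ x = star y ⬝ᵥ (M - 1).mulVec x := by
    rw [Matrix.sub_mulVec, Matrix.one_mulVec, dotProduct_sub]
  rw [h1]
  have key : ∀ i, ‖star (y i) * ((M - 1).mulVec x i)‖ ≤ (∑ j, ‖(M - 1) i j‖) * l2 x * l2 y := by
    intro i
    rw [norm_mul, norm_star]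
    have h2 : ‖(M - 1).mulVec x i‖ ≤ ∑ j, ‖(M - 1) i j‖ * l2 x := by
      calc ‖∑ j, (M - 1) i j * x j‖ ≤ ∑ j, ‖(M - 1) i j * x j‖ := norm_sum_le _ _
        _ ≤ ∑ j, ‖(M - 1) i j‖ * l2 x := Finset.sum_le_sum fun j _ => by
            rw [norm_mul]; exact mul_le_mul_of_nonneg_left (norm_le_l2 x j) (norm_nonneg _)
    calc ‖y i‖ * ‖(M - 1).mulVec x i‖ ≤ l2 y * ((∑ j, ‖(M - 1) i j‖) * l2 x) := by
          rw [← Finset.sum_mul] at h2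
          exact mul_le_mul (norm_le_l2 y i) h2 (norm_nonneg _) (l2_nonneg y)
      _ = (∑ j, ‖(M - 1) i j‖) * l2 x * l2 y := by ring
  calc ‖star y ⬝ᵥ (M - 1).mulVec x‖ ≤ ∑ i, ‖star (y i) * ((M - 1).mulVec x i)‖ := by
        simpa only [dotProduct, Pi.star_apply] using
          norm_sum_le Finset.univ (fun i => star (y i) * ((M - 1).mulVec x i))
    _ ≤ ∑ i, (∑ j, ‖(M - 1) i j‖) * l2 x * l2 y := Finset.sum_le_sum fun i _ => key i
    _ = (∑ i, ∑ j, ‖(M - 1) i j‖) * l2 x * l2 y := by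
        rw [Finset.sum_mul, Finset.sum_mul]

lemma theta_spec {ι : Type*} [Fintype ι] [DecidableEq ι] (s : ℕ) (M : Matrix ι ι 𝕜) :
    0 ≤ theta s M ∧ ∀ J : Finset ι, J.card ≤ s →
      ∀ x y : ι → 𝕜, (∀ i, x i ≠ 0 → i ∈ J) → (∀ i, y i ≠ 0 → i ∈ J) →
        ‖star y ⬝ᵥ M.mulVec x - star y ⬝ᵥ x‖ ≤ theta s M * l2 x * l2 y := by
  have hne := theta_set_nonempty (𝕜 := 𝕜) s M
  have h0 : 0 ≤ theta s M := le_csInf hne fun δ hδ => hδ.1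
  refine ⟨h0, fun J hJ x y hx hy => ?_⟩
  rcases eq_or_lt_of_le (mul_nonneg (l2_nonneg x) (l2_nonneg y)) with hc0 | hc0
  · obtain ⟨δ, hδ⟩ := hne
    have h := hδ.2 J hJ x y hx hy
    have e : δ * l2 x * l2 y = 0 := by rw [mul_assoc, ← hc0, mul_zero]
    have e2 : theta s M * l2 x * l2 y = 0 := by rw [mul_assoc, ← hc0, mul_zero]
    rw [e] at h
    rw [e2]
    exact h
  · rw [mul_assoc, ← div_le_iff₀ hc0]
    refine le_csInf hne fun δ hδ => ?_
    rw [div_le_iff₀ hc0]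
    have h := hδ.2 J hJ x y hx hy
    rw [mul_assoc] at h
    exact h

lemma theta_le {ι : Type*} [Fintype ι] [DecidableEq ι] (s : ℕ) (M : Matrix ι ι 𝕜) {δ : ℝ}
    (h0 : 0 ≤ δ)
    (h : ∀ J : Finset ι, J.card ≤ s →
      ∀ x y : ι → 𝕜, (∀ i, x i ≠ 0 → i ∈ J) → (∀ i, y i ≠ 0 → i ∈ J) →
        ‖star y ⬝ᵥ M.mulVec x - star y ⬝ᵥ x‖ ≤ δ * l2 x * l2 y) :
    theta s M ≤ δ :=
  csInf_le ⟨0, fun a ha => ha.1⟩ ⟨h0, h⟩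

set_option maxHeartbeats 1000000 in
lemma endgame (θ X Y W A : ℝ) (hθ0 : 0 ≤ θ) (hθ1 : θ ≤ 1) (hX : 0 ≤ X) (hY : 0 ≤ Y)
    (hW : 0 ≤ W) (hA : 0 ≤ A)
    (hWb : W ≤ θ * Real.sqrt (X + W) * Real.sqrt W)
    (hmain : ∀ t : ℝ, 0 ≤ t → A + t * W ≤ θ * Real.sqrt (X + W) * Real.sqrt (Y + t ^ 2 * W)) :
    A ≤ θ * Real.sqrt X * Real.sqrt Y := by
  have hXW : (0:ℝ) ≤ X + W := by linarith
  have hsq : ∀ t : ℝ, 0 ≤ t → (A + t * W) ^ 2 ≤ θ ^ 2 * (X + W) * (Y + t ^ 2 * W) := by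
    intro t ht
    have h1 := hmain t ht
    have h2 : (0:ℝ) ≤ A + t * W := by positivity
    have hYt : (0:ℝ) ≤ Y + t ^ 2 * W := by positivity
    have h3 : (θ * Real.sqrt (X + W) * Real.sqrt (Y + t ^ 2 * W)) ^ 2
        = θ ^ 2 * (X + W) * (Y + t ^ 2 * W) := by
      rw [mul_pow, mul_pow, Real.sq_sqrt hXW, Real.sq_sqrt hYt]
    calc (A + t * W) ^ 2 ≤ (θ * Real.sqrt (X + W) * Real.sqrt (Y + t ^ 2 * W)) ^ 2 :=
          pow_le_pow_left₀ h2 h1 2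
      _ = _ := h3
  set B : ℝ := θ ^ 2 * (X + W) - W with hB
  have hq' : ∀ t : ℝ, 0 ≤ t → A ^ 2 + 2 * A * t * W ≤ θ ^ 2 * (X + W) * Y + t ^ 2 * B * W := by
    intro t ht
    have key : (A + t * W) ^ 2 = A ^ 2 + 2 * A * t * W + t ^ 2 * W ^ 2 := by ring
    have key2 : θ ^ 2 * (X + W) * (Y + t ^ 2 * W)
        = θ ^ 2 * (X + W) * Y + t ^ 2 * B * W + t ^ 2 * W ^ 2 := by rw [hB]; ring
    have h1 := hsq t ht
    linarith [h1, key.le, key2.le]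
  have hθsq : θ ^ 2 ≤ 1 := by nlinarith
  have hBX : B ≤ θ ^ 2 * X := by
    have h1 : 0 ≤ (1 - θ ^ 2) * W := mul_nonneg (by linarith) hW
    rw [hB]; nlinarith [h1]
  have final : A ^ 2 ≤ θ ^ 2 * X * Y := by
    rcases eq_or_lt_of_le hW with hW0 | hW0
    · have h := hq' 0 le_rfl
      nlinarith [h]
    · have h1 : W ^ 2 ≤ θ ^ 2 * (X + W) * W := by
        have h2 := pow_le_pow_left₀ hW hWb 2
        rw [mul_pow, mul_pow, Real.sq_sqrt hXW, Real.sq_sqrt hW] at h2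
        linarith [h2]
      have hB0 : 0 ≤ B := by
        rw [pow_two] at h1
        have h3 : W * W ≤ θ ^ 2 * (X + W) * W := h1
        have h4 : W ≤ θ ^ 2 * (X + W) := le_of_mul_le_mul_right h3 hW0
        rw [hB]; linarith
      rcases eq_or_lt_of_le hB0 with hBz | hBz
      · have e2 : θ ^ 2 * (X + W) = W := by
          have h5 : (0:ℝ) = θ ^ 2 * (X + W) - W := by rw [hBz, hB]
          linarith
        rcases eq_or_lt_of_le hA with hA0 | hA0
        · have hpos : (0:ℝ) ≤ θ ^ 2 * X * Y := by positivity
          calc A ^ 2 = 0 := by rw [← hA0]; ring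
            _ ≤ _ := hpos
        · exfalso
          have h := hq' (Y / A) (by positivity)
          rw [← hBz] at h
          simp only [mul_zero, zero_mul, add_zero] at h
          have e : 2 * A * (Y / A) * W = 2 * Y * W := by
            field_simp
          rw [e, e2] at h
          nlinarith [h, mul_nonneg hY hW0.le, mul_pos hA0 hA0]
      · have hBne : B ≠ 0 := ne_of_gt hBz
        have h := hq' (A / B) (by positivity)
        have h2 := mul_le_mul_of_nonneg_right h (mul_pos hBz hBz).le
        have e5 : θ ^ 2 * (X + W) = B + W := by rw [hB]; ring
        have e6 : (A ^ 2 + 2 * A * (A / B) * W) * (B * B)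
            = A ^ 2 * B * B + 2 * A * A * W * B := by field_simp
        have e7 : (θ ^ 2 * (X + W) * Y + (A / B) ^ 2 * B * W) * (B * B)
            = θ ^ 2 * (X + W) * Y * B * B + A * A * W * B := by field_simp
        rw [e6, e7, e5] at h2
        have h3 : A ^ 2 * B * (B + W) ≤ Y * B * B * (B + W) := by linarith [h2]
        have hBWpos : 0 < B + W := by linarith
        have h4 : A ^ 2 * B ≤ Y * B * B := le_of_mul_le_mul_right h3 hBWpos
        have h5 : A ^ 2 ≤ Y * B := le_of_mul_le_mul_right h4 hBz
        nlinarith [h5, mul_le_mul_of_nonneg_left hBX hY]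
  have h6 : (0:ℝ) ≤ θ * Real.sqrt X * Real.sqrt Y := by positivity
  have hrhs : (θ * Real.sqrt X * Real.sqrt Y) ^ 2 = θ ^ 2 * X * Y := by
    rw [mul_pow, mul_pow, Real.sq_sqrt hX, Real.sq_sqrt hY]
  calc A = Real.sqrt (A ^ 2) := (Real.sqrt_sq hA).symm
    _ ≤ Real.sqrt ((θ * Real.sqrt X * Real.sqrt Y) ^ 2) := Real.sqrt_le_sqrt (by rw [hrhs]; exact final)
    _ = _ := Real.sqrt_sq h6

lemma star_dot_self {ι : Type*} [Fintype ι] (x : ι → 𝕜) :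
    star x ⬝ᵥ x = ((∑ i, ‖x i‖ ^ 2 : ℝ) : 𝕜) := by
  simp only [dotProduct, Pi.star_apply, RCLike.star_def, RCLike.conj_mul]
  norm_cast

end Aux

/-- the restricted biorthogonality constant is preserved under oblique
projection. -/
theorem statement4 (m n s r : ℕ) (hs : 1 ≤ s) (Ψ Ψt : Matrix (Fin m) (Fin n) 𝕜)
    (Jhat : Finset (Fin n)) (hr : Jhat.card = r)
    (hθ : theta (s + r) (Ψtᴴ * Ψ) < 1) :
    IsUnit ((cols Ψt Jhat)ᴴ * cols Ψ Jhat).det ∧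
      theta s ((cols Ψt Jhatᶜ)ᴴ * obliqueE Ψ Ψt Jhat * cols Ψ Jhatᶜ) ≤
        theta (s + r) (Ψtᴴ * Ψ) := by
  classical
  obtain ⟨hθ0, hθb⟩ := theta_spec (𝕜 := 𝕜) (s + r) (Ψtᴴ * Ψ)
  -- Part 1 : invertibility
  have hdet : IsUnit ((cols Ψt Jhat)ᴴ * cols Ψ Jhat).det := by
    rw [isUnit_iff_ne_zero]
    intro hdet0
    obtain ⟨u, hu0, hu⟩ := Matrix.exists_mulVec_eq_zero_iff.2 hdet0
    set x' : Fin n → 𝕜 := extv Jhat u with hx'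
    have hΨx : Ψ.mulVec x' = (cols Ψ Jhat).mulVec u := mulVec_extv Ψ Jhat u
    have hMx : ∀ j : {j // j ∈ Jhat}, (Ψtᴴ * Ψ).mulVec x' ↑j = 0 := by
      intro j
      rw [← Matrix.mulVec_mulVec, ← colsH_mulVec Ψt Jhat _ j, hΨx, Matrix.mulVec_mulVec, hu]
      rfl
    have hdot0 : star x' ⬝ᵥ (Ψtᴴ * Ψ).mulVec x' = 0 := by
      rw [hx', star_extv_dot]
      exact Finset.sum_eq_zero fun j _ => by rw [← hx', hMx j, mul_zero]
    set S : ℝ := ∑ i, ‖x' i‖ ^ 2 with hS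
    have hSnn : 0 ≤ S := Finset.sum_nonneg fun i _ => sq_nonneg _
    have hdot1 : star x' ⬝ᵥ x' = (S : 𝕜) := star_dot_self x'
    have hsupp : ∀ i, x' i ≠ 0 → i ∈ Jhat := fun i hi => by
      by_contra h; exact hi (by rw [hx']; exact extv_not_mem _ _ h)
    have hcard : Jhat.card ≤ s + r := by omega
    have hb := hθb Jhat hcard x' x' hsupp hsupp
    rw [hdot0, hdot1] at hb
    have hlhs : ‖(0:𝕜) - (S:𝕜)‖ = S := by
      rw [zero_sub, norm_neg, RCLike.norm_ofReal, abs_of_nonneg hSnn]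
    rw [hlhs, mul_assoc, l2_mul_self, ← hS] at hb
    have hSpos : 0 < S := by
      have hx'0 : x' ≠ 0 := by
        obtain ⟨j, hj⟩ := Function.ne_iff.1 hu0
        intro hcontr
        apply hj
        have h2 := congrFun hcontr ↑j
        rwa [hx', extv_coe, Pi.zero_apply] at h2
      obtain ⟨i, hi⟩ := Function.ne_iff.1 hx'0
      have hpos : 0 < ‖x' i‖ ^ 2 := by
        have hne : x' i ≠ 0 := by simpa using hi
        exact pow_pos (norm_pos_iff.2 hne) 2
      exact Finset.sum_pos' (fun i _ => sq_nonneg _) ⟨i, Finset.mem_univ i, hpos⟩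
    nlinarith [hb, hθ, hSpos]
  refine ⟨hdet, theta_le _ _ hθ0 ?_⟩
  intro J hJ x y hx hy
  have hAA : ((cols Ψt Jhat)ᴴ * cols Ψ Jhat) * ((cols Ψt Jhat)ᴴ * cols Ψ Jhat)⁻¹ = 1 :=
    Matrix.mul_nonsing_inv _ hdet
  set x' : Fin n → 𝕜 := extv Jhatᶜ x with hx'
  set y' : Fin n → 𝕜 := extv Jhatᶜ y with hy'
  set g : {j // j ∈ Jhat} → 𝕜 := (cols Ψt Jhat)ᴴ.mulVec (Ψ.mulVec x') with hg
  set w : {j // j ∈ Jhat} → 𝕜 := ((cols Ψt Jhat)ᴴ * cols Ψ Jhat)⁻¹.mulVec g with hw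
  set ev : Fin n → 𝕜 := extv Jhat w with hev
  set xh : Fin n → 𝕜 := x' - ev with hxh
  have h1 : Ψ.mulVec xh = Ψ.mulVec x' - (cols Ψ Jhat).mulVec w := by
    simp only [hxh, hx', hev, Matrix.mulVec_sub, mulVec_extv]
  have hEform : (obliqueE Ψ Ψt Jhat).mulVec (Ψ.mulVec x') = Ψ.mulVec xh := by
    rw [obliqueE, Matrix.sub_mulVec, Matrix.one_mulVec, h1]
    congr 1
    rw [← Matrix.mulVec_mulVec, ← Matrix.mulVec_mulVec, ← hg, ← hw]
  have h2 : (cols Ψt Jhat)ᴴ.mulVec (Ψ.mulVec xh) = 0 := by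
    rw [h1, Matrix.mulVec_sub, ← hg, Matrix.mulVec_mulVec, hw, Matrix.mulVec_mulVec, hAA,
      Matrix.one_mulVec, sub_self]
  have h3 : ∀ j : {j // j ∈ Jhat}, (Ψtᴴ * Ψ).mulVec xh ↑j = 0 := by
    intro j
    rw [← Matrix.mulVec_mulVec, ← colsH_mulVec Ψt Jhat _ j, h2]
    rfl
  set Wr : ℝ := ∑ j, ‖w j‖ ^ 2 with hWr
  set Xr : ℝ := ∑ j, ‖x j‖ ^ 2 with hXr
  set Yr : ℝ := ∑ j, ‖y j‖ ^ 2 with hYr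
  have hWnn : 0 ≤ Wr := Finset.sum_nonneg fun i _ => sq_nonneg _
  have hXnn : 0 ≤ Xr := Finset.sum_nonneg fun i _ => sq_nonneg _
  have hYnn : 0 ≤ Yr := Finset.sum_nonneg fun i _ => sq_nonneg _
  have hd1 : star ev ⬝ᵥ (Ψtᴴ * Ψ).mulVec xh = 0 := by
    rw [hev, star_extv_dot]
    exact Finset.sum_eq_zero fun j _ => by rw [h3 j, mul_zero]
  have hd2 : star ev ⬝ᵥ x' = 0 := by
    rw [hev, star_extv_dot]
    refine Finset.sum_eq_zero fun j _ => ?_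
    rw [hx', extv_not_mem _ _ (by simp [Finset.mem_compl, j.2] : (↑j : Fin n) ∉ Jhatᶜ), mul_zero]
  have hd3 : star ev ⬝ᵥ ev = (Wr : 𝕜) := by
    have hsum : ∑ i, ‖ev i‖ ^ 2 = Wr := by
      rw [hev, hWr]; exact sum_extv Jhat w (fun i t => ‖t‖ ^ 2) (by intro i; simp)
    rw [star_dot_self, hsum]
  have hd4 : star y' ⬝ᵥ ev = 0 := by
    rw [hy', star_extv_dot]
    refine Finset.sum_eq_zero fun j _ => ?_
    rw [hev, extv_not_mem _ _ (Finset.mem_compl.1 j.2), mul_zero]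
  have hd5 : star y' ⬝ᵥ xh = star y' ⬝ᵥ x' := by
    rw [hxh, dotProduct_sub, hd4, sub_zero]
  have hd6 : star ev ⬝ᵥ xh = -(Wr : 𝕜) := by
    rw [hxh, dotProduct_sub, hd2, hd3, zero_sub]
  set a : 𝕜 := star y' ⬝ᵥ (Ψtᴴ * Ψ).mulVec xh - star y' ⬝ᵥ x' with ha
  have hgoal : star y ⬝ᵥ ((cols Ψt Jhatᶜ)ᴴ * obliqueE Ψ Ψt Jhat * cols Ψ Jhatᶜ).mulVec x
      - star y ⬝ᵥ x = a := by
    have e1 : ((cols Ψt Jhatᶜ)ᴴ * obliqueE Ψ Ψt Jhat * cols Ψ Jhatᶜ).mulVec x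
        = (cols Ψt Jhatᶜ)ᴴ.mulVec ((obliqueE Ψ Ψt Jhat).mulVec ((cols Ψ Jhatᶜ).mulVec x)) := by
      rw [Matrix.mulVec_mulVec, Matrix.mulVec_mulVec]
    have e2 : (cols Ψ Jhatᶜ).mulVec x = Ψ.mulVec x' := by rw [hx', mulVec_extv]
    have e3 : star y ⬝ᵥ ((cols Ψt Jhatᶜ)ᴴ.mulVec (Ψ.mulVec xh))
        = star y' ⬝ᵥ (Ψtᴴ * Ψ).mulVec xh := by
      rw [hy', star_extv_dot]
      simp only [dotProduct, Pi.star_apply]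
      refine Finset.sum_congr rfl fun j _ => ?_
      rw [colsH_mulVec, Matrix.mulVec_mulVec]
    have e4 : star y ⬝ᵥ x = star y' ⬝ᵥ x' := by
      rw [hy', hx', star_extv_dot]
      simp only [dotProduct, Pi.star_apply]
      exact Finset.sum_congr rfl fun j _ => by rw [extv_coe]
    rw [e1, e2, hEform, e3, e4]
  have hsumx : ∑ i, ‖x' i‖ ^ 2 = Xr := by
    rw [hx', hXr]; exact sum_extv _ x (fun i t => ‖t‖ ^ 2) (by intro i; simp)
  have hsumy : ∑ i, ‖y' i‖ ^ 2 = Yr := by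
    rw [hy', hYr]; exact sum_extv _ y (fun i t => ‖t‖ ^ 2) (by intro i; simp)
  have hsume : ∑ i, ‖ev i‖ ^ 2 = Wr := by
    rw [hev, hWr]; exact sum_extv Jhat w (fun i t => ‖t‖ ^ 2) (by intro i; simp)
  have hXW : ∑ i, ‖xh i‖ ^ 2 = Xr + Wr := by
    have hpt : ∀ i, ‖xh i‖ ^ 2 = ‖x' i‖ ^ 2 + ‖ev i‖ ^ 2 := by
      intro i
      by_cases hmem : i ∈ Jhat
      · have hx0 : x' i = 0 := by
          rw [hx']; exact extv_not_mem _ _ (by simp [Finset.mem_compl, hmem])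
        rw [hxh]; simp [hx0]
      · have he0 : ev i = 0 := by rw [hev]; exact extv_not_mem _ _ hmem
        rw [hxh]; simp [he0]
    rw [Finset.sum_congr rfl fun i _ => hpt i, Finset.sum_add_distrib, hsumx, hsume]
  have hl2xh : l2 xh = Real.sqrt (Xr + Wr) := by rw [l2, hXW]
  have hl2e : l2 ev = Real.sqrt Wr := by rw [l2, hsume]
  have hl2x : l2 x = Real.sqrt Xr := by rw [l2, ← hXr]
  have hl2y : l2 y = Real.sqrt Yr := by rw [l2, ← hYr]
  set J' : Finset (Fin n) := Jhat ∪ J.image Subtype.val with hJ'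
  have hJ'card : J'.card ≤ s + r := by
    have hc1 : J'.card ≤ Jhat.card + (J.image Subtype.val).card :=
      Finset.card_union_le _ _
    have hc2 : (J.image Subtype.val).card ≤ J.card := Finset.card_image_le
    omega
  have hys' : ∀ i, y' i ≠ 0 → i ∈ J' := by
    intro i hi
    have hic : i ∈ Jhatᶜ := by
      by_contra h; exact hi (by rw [hy']; exact extv_not_mem _ _ h)
    have hyj : y ⟨i, hic⟩ ≠ 0 := by
      rw [hy'] at hi; rwa [show extv Jhatᶜ y i = y ⟨i, hic⟩ from dif_pos hic] at hi
    exact Finset.mem_union_right _ (Finset.mem_image.2 ⟨⟨i, hic⟩, hy _ hyj, rfl⟩)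
  have hxs : ∀ i, xh i ≠ 0 → i ∈ J' := by
    intro i hi
    by_cases hmem : i ∈ Jhat
    · exact Finset.mem_union_left _ hmem
    · have he0 : ev i = 0 := by rw [hev]; exact extv_not_mem _ _ hmem
      have hne : x' i ≠ 0 := by
        rw [hxh] at hi; simpa [he0] using hi
      have hic : i ∈ Jhatᶜ := Finset.mem_compl.2 hmem
      have hxj : x ⟨i, hic⟩ ≠ 0 := by
        rw [hx'] at hne; rwa [show extv Jhatᶜ x i = x ⟨i, hic⟩ from dif_pos hic] at hne
      exact Finset.mem_union_right _ (Finset.mem_image.2 ⟨⟨i, hic⟩, hx _ hxj, rfl⟩)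
  have hes : ∀ i, ev i ≠ 0 → i ∈ J' := by
    intro i hi
    refine Finset.mem_union_left _ ?_
    by_contra h
    exact hi (by rw [hev]; exact extv_not_mem _ _ h)
  have hbw := hθb J' hJ'card xh ev hxs hes
  rw [hd1, hd6, zero_sub, neg_neg, RCLike.norm_ofReal, abs_of_nonneg hWnn, hl2xh, hl2e] at hbw
  have hmain : ∀ t : ℝ, 0 ≤ t → ‖a‖ + t * Wr ≤
      theta (s + r) (Ψtᴴ * Ψ) * Real.sqrt (Xr + Wr) * Real.sqrt (Yr + t ^ 2 * Wr) := by
    intro t ht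
    obtain ⟨c, hcnorm, hcval⟩ :
        ∃ c : 𝕜, ‖c‖ = t ∧ ‖a - star c * (Wr : 𝕜)‖ = ‖a‖ + t * Wr := by
      by_cases ha0 : a = 0
      · refine ⟨(t : 𝕜), by rw [RCLike.norm_ofReal, abs_of_nonneg ht], ?_⟩
        rw [ha0, zero_sub, norm_neg, norm_zero, zero_add, norm_mul, norm_star,
          RCLike.norm_ofReal, RCLike.norm_ofReal, abs_of_nonneg ht, abs_of_nonneg hWnn]
      · have han : (0:ℝ) < ‖a‖ := norm_pos_iff.2 ha0
        refine ⟨-((t / ‖a‖ : ℝ) : 𝕜) * star a, ?_, ?_⟩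
        · rw [norm_mul, norm_neg, RCLike.norm_ofReal, norm_star,
            abs_of_nonneg (div_nonneg ht han.le)]
          field_simp
        · have hstar : star (-((t / ‖a‖ : ℝ) : 𝕜) * star a) = -((t / ‖a‖ : ℝ) : 𝕜) * a := by
            rw [star_mul', star_star, star_neg, RCLike.star_def, RCLike.conj_ofReal]
          rw [hstar]
          have hrw : a - -((t / ‖a‖ : ℝ) : 𝕜) * a * (Wr : 𝕜)
              = ((1 + t * Wr / ‖a‖ : ℝ) : 𝕜) * a := by
            push_cast; ring
          rw [hrw, norm_mul, RCLike.norm_ofReal, abs_of_nonneg (by positivity)]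
          field_simp
    set yc : Fin n → 𝕜 := y' - c • ev with hyc
    have hycs : ∀ i, yc i ≠ 0 → i ∈ J' := by
      intro i hi
      by_cases hmem : i ∈ J'
      · exact hmem
      · exfalso
        apply hi
        have hy0 : y' i = 0 := by by_contra hh; exact hmem (hys' i hh)
        have he0 : ev i = 0 := by by_contra hh; exact hmem (hes i hh)
        rw [hyc]
        simp [hy0, he0]
    have hb2 := hθb J' hJ'card xh yc hxs hycs
    have hval : star yc ⬝ᵥ (Ψtᴴ * Ψ).mulVec xh - star yc ⬝ᵥ xh = a - star c * (Wr : 𝕜) := by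
      rw [hyc, star_sub_smul_dot, star_sub_smul_dot, hd1, hd6, hd5, ha]
      ring
    have hl2yc : l2 yc = Real.sqrt (Yr + t ^ 2 * Wr) := by
      rw [l2]
      congr 1
      have hpt : ∀ i, ‖yc i‖ ^ 2 = ‖y' i‖ ^ 2 + ‖c‖ ^ 2 * ‖ev i‖ ^ 2 := by
        intro i
        by_cases hmem : i ∈ Jhat
        · have hy0 : y' i = 0 := by
            rw [hy']; exact extv_not_mem _ _ (by simp [Finset.mem_compl, hmem])
          rw [hyc]; simp [hy0, norm_mul, mul_pow]
        · have he0 : ev i = 0 := by rw [hev]; exact extv_not_mem _ _ hmem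
          rw [hyc]; simp [he0]
      rw [Finset.sum_congr rfl fun i _ => hpt i, Finset.sum_add_distrib, ← Finset.mul_sum,
        hsumy, hsume, hcnorm]
    rw [hval, hcval, hl2xh, hl2yc] at hb2
    exact hb2
  have hend := endgame (theta (s + r) (Ψtᴴ * Ψ)) Xr Yr Wr ‖a‖ hθ0 hθ.le hXnn hYnn hWnn
    (norm_nonneg a) hbw hmain
  rw [hgoal, hl2x, hl2y]
  exact hend
end ObliquePursuit
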